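/- Let μ be a probability measure on S^1 absolutely continuous with respect to the Lebesgue measure on S^1, ν any probability measure on S^1, and h:ℝ→ℝ₊ convex increasing. The LCOT embedding ν̂^{μ,h} is invertible in the sense that ν = (ν̂^{μ,h} + id)_#μ, where id is the identity map and the sum is taken modulo ℤ. -/

import Mathlib

open MeasureTheory Set

noncomputable section

/-- Geodesic distance on the circle `ℝ/ℤ`, for representatives `x, y ∈ ℝ`:
`|x - y|_{S¹} = min_{k ∈ ℤ} |x - y + k|`. -/
def circleDist (x y : ℝ) : ℝ := ⨅ k : ℤ, |x - y + (k : ℝ)|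

/-- The CDF of a circular probability measure (represented as a probability measure on `ℝ`
supported on `[0,1)`), extended to all of `ℝ` by `F(y + n) = F(y) + n`. -/
def cdf (μ : Measure ℝ) (y : ℝ) : ℝ := (μ (Ico 0 (Int.fract y))).toReal + (⌊y⌋ : ℝ)

/-- The quantile function `F_μ⁻¹(y) := inf {x | F_μ(x) > y}`. -/
def quantile (μ : Measure ℝ) (y : ℝ) : ℝ := sInf {x : ℝ | cdf μ x > y}

/-- The CDF with respect to a reference (cutting) point `x₀`:
`F_{μ,x₀}(y) := F_μ(x₀ + y) - F_μ(x₀)`. -/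
def cdfCut (μ : Measure ℝ) (x₀ y : ℝ) : ℝ := cdf μ (x₀ + y) - cdf μ x₀

/-- The quantile of the cut CDF: `F_{μ,x₀}⁻¹(y) := inf {x | F_{μ,x₀}(x) > y}`. -/
def quantileCut (μ : Measure ℝ) (x₀ y : ℝ) : ℝ := sInf {x : ℝ | cdfCut μ x₀ x > y}

/-- The circular optimal transport cost `COT_h(μ,ν)` with ground cost `h (|x - y|_{S¹})`,
the infimum over all couplings of `μ` and `ν`. -/
def COT (h : ℝ → ℝ) (μ ν : Measure ℝ) : ℝ :=
  sInf {c : ℝ | ∃ γ : Measure (ℝ × ℝ), IsProbabilityMeasure γ ∧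
    γ.map Prod.fst = μ ∧ γ.map Prod.snd = ν ∧
    c = ∫ p, h (circleDist p.1 p.2) ∂γ}

/-- The transport cost associated with cutting the circle at `x₀`:
`∫₀¹ h(|F_{μ,x₀}⁻¹(x) - F_{ν,x₀}⁻¹(x)|) dx`. -/
def cutCost (h : ℝ → ℝ) (μ ν : Measure ℝ) (x₀ : ℝ) : ℝ :=
  ∫ x in (0:ℝ)..1, h |quantileCut μ x₀ x - quantileCut ν x₀ x|

/-- The transport cost associated with a shift `α`:
`∫₀¹ h(|F_μ⁻¹(x) - F_ν⁻¹(x - α)|) dx`. -/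
def shiftCost (h : ℝ → ℝ) (μ ν : Measure ℝ) (α : ℝ) : ℝ :=
  ∫ x in (0:ℝ)..1, h |quantile μ x - quantile ν (x - α)|

/-- The circular Monge map determined by a cutting point `x_cut`:
`M_μ^ν(x) := F_{ν,x_cut}⁻¹(F_{μ,x_cut}(x - x_cut)) + x_cut`. -/
def mongeMap (μ ν : Measure ℝ) (xcut : ℝ) (x : ℝ) : ℝ :=
  quantileCut ν xcut (cdfCut μ xcut (x - xcut)) + xcut

/-- The LCOT embedding of `ν` with respect to the reference `μ` and shift `α`:
`ν̂(x) := F_ν⁻¹(F_μ(x) - α) - x`. -/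
def lcotEmbed (μ ν : Measure ℝ) (α : ℝ) (x : ℝ) : ℝ :=
  quantile ν (cdf μ x - α) - x

set_option linter.unusedSectionVars false

namespace LCOTAux

variable (m : Measure ℝ) [IsProbabilityMeasure m]

lemma toReal_le_one (s : Set ℝ) : (m s).toReal ≤ 1 := by
  have := measure_mono (subset_univ s) (μ := m)
  rw [measure_univ] at this
  simpa using ENNReal.toReal_mono ENNReal.one_ne_top this

omit [IsProbabilityMeasure m] in
lemma floor_le_cdf (x : ℝ) : (⌊x⌋ : ℝ) ≤ cdf m x := by
  have : (0:ℝ) ≤ (m (Ico 0 (Int.fract x))).toReal := ENNReal.toReal_nonneg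
  unfold cdf; linarith

lemma cdf_le_floor_add_one (x : ℝ) : cdf m x ≤ (⌊x⌋ : ℝ) + 1 := by
  have := toReal_le_one m (Ico 0 (Int.fract x))
  simp [cdf]; linarith

omit [IsProbabilityMeasure m] in
lemma cdf_intCast (n : ℤ) : cdf m n = n := by
  simp [cdf]

lemma cdf_mono : Monotone (cdf m) := by
  intro x y hxy
  rcases eq_or_lt_of_le (Int.floor_le_floor hxy) with hf | hf
  · have hfr : Int.fract x ≤ Int.fract y := by
      unfold Int.fract; rw [hf]; linarith
    have : m (Ico 0 (Int.fract x)) ≤ m (Ico 0 (Int.fract y)) :=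
      measure_mono (Ico_subset_Ico le_rfl hfr)
    have := ENNReal.toReal_mono (measure_ne_top m _) this
    simp only [cdf, hf]; linarith
  · have h1 : cdf m x ≤ (⌊x⌋ : ℝ) + 1 := cdf_le_floor_add_one m x
    have h2 : (⌊y⌋ : ℝ) ≤ cdf m y := floor_le_cdf m y
    have : (⌊x⌋ : ℝ) + 1 ≤ (⌊y⌋ : ℝ) := by exact_mod_cast hf
    linarith

omit [IsProbabilityMeasure m] in
lemma cdf_add_int (x : ℝ) (n : ℤ) : cdf m (x + n) = cdf m x + n := by
  simp [cdf, Int.fract_add_intCast, Int.floor_add_intCast]; ring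

lemma cdf_measurable : Measurable (cdf m) := (cdf_mono m).measurable

lemma quantile_set_nonempty (u : ℝ) : {x : ℝ | cdf m x > u}.Nonempty := by
  refine ⟨((⌊u⌋ + 2 : ℤ) : ℝ), ?_⟩
  have h := floor_le_cdf m ((⌊u⌋ + 2 : ℤ) : ℝ)
  rw [Int.floor_intCast] at h
  have : u < ((⌊u⌋ + 2 : ℤ) : ℝ) := by
    push_cast
    have := Int.lt_floor_add_one u
    linarith
  exact lt_of_lt_of_le this h

lemma quantile_set_bddBelow (u : ℝ) : BddBelow {x : ℝ | cdf m x > u} := by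
  refine ⟨u - 1, fun x hx => ?_⟩
  have h1 : cdf m x ≤ (⌊x⌋ : ℝ) + 1 := cdf_le_floor_add_one m x
  have h2 : (⌊x⌋ : ℝ) ≤ x := Int.floor_le x
  have : u < cdf m x := hx
  linarith

lemma quantile_mono : Monotone (quantile m) := by
  intro u v huv
  exact csInf_le_csInf (quantile_set_bddBelow m u) (quantile_set_nonempty m v)
    (fun x hx => lt_of_le_of_lt huv hx)

lemma quantile_measurable : Measurable (quantile m) := (quantile_mono m).measurable

lemma quantile_add_int (u : ℝ) (n : ℤ) : quantile m (u + n) = quantile m u + n := by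
  have hmem : ∀ x : ℝ, x ∈ {x : ℝ | cdf m x > u + n} ↔ (x - n) ∈ {x : ℝ | cdf m x > u} := by
    intro x
    have h := cdf_add_int m (x - n) n
    rw [sub_add_cancel] at h
    simp only [mem_setOf_eq]
    constructor <;> intro hh <;> linarith
  unfold quantile
  apply le_antisymm
  · have : sInf {x : ℝ | cdf m x > u + n} - n ≤ sInf {x : ℝ | cdf m x > u} := by
      apply le_csInf (quantile_set_nonempty m u)
      intro y hy
      have hy' : y + (n:ℝ) ∈ {x : ℝ | cdf m x > u + n} := by
        rw [hmem]; simpa using hy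
      have := csInf_le (quantile_set_bddBelow m (u + n)) hy'
      linarith
    linarith
  · apply le_csInf (quantile_set_nonempty m (u + n))
    intro x hx
    have := csInf_le (quantile_set_bddBelow m u) ((hmem x).mp hx)
    linarith

lemma compl_null (hm : m (Ico 0 1) = 1) : m (Ico (0:ℝ) 1)ᶜ = 0 := by
  have h := measure_compl (μ := m) (measurableSet_Ico (a := (0:ℝ)) (b := 1)) (measure_ne_top m _)
  rw [hm, measure_univ] at h
  simpa using h

lemma Iio_zero_null (hm : m (Ico 0 1) = 1) : m (Iio (0:ℝ)) = 0 := by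
  refine measure_mono_null ?_ (compl_null m hm)
  intro x hx
  simp only [mem_compl_iff, mem_Ico, not_and, not_lt]
  intro h; exact absurd h (not_le.2 hx)

lemma cdf_eq_Iio (hm : m (Ico 0 1) = 1) {x : ℝ} (hx : x ∈ Ico (0:ℝ) 1) :
    cdf m x = (m (Iio x)).toReal := by
  have hfr : Int.fract x = x := Int.fract_eq_self.2 ⟨hx.1, hx.2⟩
  have hfl : ⌊x⌋ = 0 := Int.floor_eq_zero_iff.2 ⟨hx.1, hx.2⟩
  have hIio : m (Iio x) = m (Ico 0 x) := by
    apply le_antisymm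
    · calc m (Iio x) ≤ m (Iio 0 ∪ Ico 0 x) := by
            apply measure_mono; intro y hy
            rcases lt_or_ge y 0 with hy0 | hy0
            · exact Or.inl hy0
            · exact Or.inr ⟨hy0, hy⟩
          _ ≤ m (Iio 0) + m (Ico 0 x) := measure_union_le _ _
          _ = m (Ico 0 x) := by rw [Iio_zero_null m hm, zero_add]
    · exact measure_mono (fun y hy => hy.2)
  simp [cdf, hfr, hfl, hIio]

lemma quantile_nonneg {u : ℝ} (hu : 0 ≤ u) : 0 ≤ quantile m u := by
  apply le_csInf (quantile_set_nonempty m u)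
  intro x hx
  by_contra hx0
  push_neg at hx0
  have h1 : cdf m x ≤ (⌊x⌋ : ℝ) + 1 := cdf_le_floor_add_one m x
  have h2 : ⌊x⌋ ≤ -1 := by
    have : ⌊x⌋ < 0 := Int.floor_lt.2 (by simpa using hx0)
    omega
  have h2' : (⌊x⌋ : ℝ) ≤ -1 := by exact_mod_cast h2
  have : u < cdf m x := hx
  linarith

/-- Key characterization: for `u ∈ [0,1)` and `t ∈ (0,1]`,
`quantile m u < t ↔ u < m(Iio t)`. -/
lemma quantile_lt_iff (hm : m (Ico 0 1) = 1) {u t : ℝ} (hu : 0 ≤ u)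
    (ht0 : 0 < t) (ht1 : t ≤ 1) :
    quantile m u < t ↔ u < (m (Iio t)).toReal := by
  constructor
  · intro hq
    obtain ⟨x, hx, hxt⟩ := (csInf_lt_iff (quantile_set_bddBelow m u)
      (quantile_set_nonempty m u)).1 hq
    have hx0 : 0 ≤ x := by
      by_contra hx0
      push_neg at hx0
      have h1 : cdf m x ≤ (⌊x⌋ : ℝ) + 1 := cdf_le_floor_add_one m x
      have h2 : ⌊x⌋ ≤ -1 := by
        have : ⌊x⌋ < 0 := Int.floor_lt.2 (by simpa using hx0)
        omega
      have h2' : (⌊x⌋ : ℝ) ≤ -1 := by exact_mod_cast h2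
      have : u < cdf m x := hx
      linarith
    have hx1 : x < 1 := lt_of_lt_of_le hxt ht1
    have hcdf : cdf m x = (m (Iio x)).toReal := cdf_eq_Iio m hm ⟨hx0, hx1⟩
    have hxS : u < (m (Iio x)).toReal := by rw [← hcdf]; exact hx
    have hle : (m (Iio x)).toReal ≤ (m (Iio t)).toReal :=
      ENNReal.toReal_mono (measure_ne_top m _) (measure_mono (Iio_subset_Iio hxt.le))
    linarith
  · intro hu'
    have hne : m (Iio t) ≠ ⊤ := measure_ne_top m _
    have hofReal : ENNReal.ofReal u < m (Iio t) :=
      (ENNReal.ofReal_lt_iff_lt_toReal hu hne).2 hu'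
    -- approximate Iio t from inside
    set sfun : ℕ → ℝ := fun n => t - t / (n + 1) with hsfun
    have hmono : Monotone fun n => Iio (sfun n) := by
      intro a b hab
      apply Iio_subset_Iio
      have hc : (a:ℝ) ≤ b := Nat.cast_le.2 hab
      have hd : t / (b + 1) ≤ t / (a + 1) :=
        div_le_div_of_nonneg_left ht0.le (by positivity) (by linarith)
      simp only [hsfun]; linarith
    have hunion : (⋃ n, Iio (sfun n)) = Iio t := by
      apply Subset.antisymm
      · apply iUnion_subset
        intro n y hy
        have : t / (n + 1) > 0 := by positivity
        simp only [mem_Iio] at hy ⊢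
        simp only [hsfun] at hy
        linarith
      · intro y hy
        simp only [mem_Iio] at hy
        obtain ⟨n, hn⟩ := exists_nat_gt (t / (t - y))
        refine mem_iUnion.2 ⟨n, ?_⟩
        simp only [mem_Iio, hsfun]
        have hty : 0 < t - y := by linarith
        have hn1 : t / (t - y) < n + 1 := by push_cast; linarith
        have : t / (n + 1) < t - y := by
          rw [div_lt_iff₀ (by positivity)] at hn1 ⊢
          · nlinarith
        linarith
    have htend : Filter.Tendsto (fun n => m (Iio (sfun n))) Filter.atTop (nhds (m (Iio t))) := by
      have := tendsto_measure_iUnion_atTop (μ := m) hmono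
      rwa [hunion] at this
    have hev : ∀ᶠ n in Filter.atTop, ENNReal.ofReal u < m (Iio (sfun n)) :=
      htend.eventually (eventually_gt_nhds hofReal)
    obtain ⟨n, hn⟩ := hev.exists
    have hsn_lt : sfun n < t := by
      have : t / (n + 1) > 0 := by positivity
      simp only [hsfun]; linarith
    have hsn0 : 0 ≤ sfun n := by
      by_contra hneg
      push_neg at hneg
      have : m (Iio (sfun n)) ≤ m (Iio 0) := measure_mono (Iio_subset_Iio hneg.le)
      rw [Iio_zero_null m hm] at this
      simp only [le_zero_iff] at this
      rw [this] at hn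
      exact absurd hn (by simp)
    have hcdf : cdf m (sfun n) = (m (Iio (sfun n))).toReal :=
      cdf_eq_Iio m hm ⟨hsn0, lt_of_lt_of_le hsn_lt ht1⟩
    have hmem : sfun n ∈ {x : ℝ | cdf m x > u} := by
      simp only [mem_setOf_eq, hcdf]
      exact (ENNReal.ofReal_lt_iff_lt_toReal hu (measure_ne_top m _)).1 hn
    exact lt_of_le_of_lt (csInf_le (quantile_set_bddBelow m u) hmem) hsn_lt

lemma Iio_one_eq (hm : m (Ico 0 1) = 1) : m (Iio (1:ℝ)) = 1 := by
  apply le_antisymm (prob_le_one)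
  rw [← hm]
  exact measure_mono (fun y hy => hy.2)

lemma quantile_lt_one (hm : m (Ico 0 1) = 1) {u : ℝ} (hu0 : 0 ≤ u) (hu1 : u < 1) :
    quantile m u < 1 := by
  rw [quantile_lt_iff m hm hu0 one_pos le_rfl, Iio_one_eq m hm]
  simpa using hu1

lemma quantile_mem_Ico (hm : m (Ico 0 1) = 1) {u : ℝ} (hu : u ∈ Ico (0:ℝ) 1) :
    quantile m u ∈ Ico (0:ℝ) 1 :=
  ⟨quantile_nonneg m hu.1, quantile_lt_one m hm hu.1 hu.2⟩

lemma fract_quantile (hm : m (Ico 0 1) = 1) (y : ℝ) :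
    Int.fract (quantile m y) = quantile m (Int.fract y) := by
  have h1 : quantile m y = quantile m (Int.fract y) + ⌊y⌋ := by
    rw [← quantile_add_int m (Int.fract y) ⌊y⌋, Int.fract_add_floor]
  rw [h1, Int.fract_add_intCast, Int.fract_eq_self.2
    ⟨(quantile_mem_Ico m hm ⟨Int.fract_nonneg y, Int.fract_lt_one y⟩).1,
     (quantile_mem_Ico m hm ⟨Int.fract_nonneg y, Int.fract_lt_one y⟩).2⟩]

omit [IsProbabilityMeasure m] in
lemma tendsto_Iio_left (q : ℝ) :
    Filter.Tendsto (fun n : ℕ => m (Iio (q - 1/(n+1)))) Filter.atTop (nhds (m (Iio q))) := by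
  have hmono : Monotone (fun n : ℕ => Iio (q - 1/((n:ℝ)+1))) := by
    intro a b hab
    apply Iio_subset_Iio
    have hc : (a:ℝ) ≤ b := Nat.cast_le.2 hab
    have : 1/((b:ℝ)+1) ≤ 1/((a:ℝ)+1) :=
      div_le_div_of_nonneg_left one_pos.le (by positivity) (by linarith)
    linarith
  have hunion : (⋃ n : ℕ, Iio (q - 1/((n:ℝ)+1))) = Iio q := by
    apply Subset.antisymm
    · apply iUnion_subset
      intro n y hy
      have : (0:ℝ) < 1/((n:ℝ)+1) := by positivity
      simp only [mem_Iio] at hy ⊢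
      linarith
    · intro y hy
      simp only [mem_Iio] at hy
      obtain ⟨n, hn⟩ := exists_nat_gt (1 / (q - y))
      refine mem_iUnion.2 ⟨n, ?_⟩
      simp only [mem_Iio]
      have hqy : 0 < q - y := by linarith
      have hn1 : 1 / (q - y) < (n:ℝ) + 1 := by linarith
      have : 1/((n:ℝ)+1) < q - y := by
        rw [div_lt_iff₀ (by positivity)] at hn1 ⊢
        nlinarith
      linarith
  have := tendsto_measure_iUnion_atTop (μ := m) hmono
  rwa [hunion] at this

lemma tendsto_Iic_right (q : ℝ) :
    Filter.Tendsto (fun n : ℕ => m (Iic (q + 1/(n+1)))) Filter.atTop (nhds (m (Iic q))) := by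
  have hanti : Antitone (fun n : ℕ => Iic (q + 1/((n:ℝ)+1))) := by
    intro a b hab
    apply Iic_subset_Iic.2
    have hc : (a:ℝ) ≤ b := Nat.cast_le.2 hab
    have : 1/((b:ℝ)+1) ≤ 1/((a:ℝ)+1) :=
      div_le_div_of_nonneg_left one_pos.le (by positivity) (by linarith)
    linarith
  have hinter : (⋂ n : ℕ, Iic (q + 1/((n:ℝ)+1))) = Iic q := by
    apply Subset.antisymm
    · intro y hy
      simp only [mem_iInter, mem_Iic] at hy
      simp only [mem_Iic]
      by_contra hc
      push_neg at hc
      obtain ⟨n, hn⟩ := exists_nat_gt (1 / (y - q))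
      have hyq : 0 < y - q := by linarith
      have hn1 : 1 / (y - q) < (n:ℝ) + 1 := by linarith
      have h2 : 1/((n:ℝ)+1) < y - q := by
        rw [div_lt_iff₀ (by positivity)] at hn1 ⊢
        nlinarith
      have := hy n
      linarith
    · intro y hy
      simp only [mem_Iic] at hy
      simp only [mem_iInter, mem_Iic]
      intro n
      have : (0:ℝ) < 1/((n:ℝ)+1) := by positivity
      linarith
  have := tendsto_measure_iInter_atTop (μ := m)
    (fun n => measurableSet_Iic.nullMeasurableSet) hanti ⟨0, measure_ne_top m _⟩
  rwa [hinter] at this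

lemma measure_Iic_eq_Iio (hac : m ≪ volume) (x : ℝ) : m (Iic x) = m (Iio x) := by
  have hsing : m {x} = 0 := hac Real.volume_singleton
  apply le_antisymm
  · calc m (Iic x) ≤ m (Iio x ∪ {x}) := by
          apply measure_mono; intro y hy
          rcases lt_or_eq_of_le (mem_Iic.1 hy) with h | h
          · exact Or.inl h
          · exact Or.inr (by simp [h])
      _ ≤ m (Iio x) + m {x} := measure_union_le _ _
      _ = m (Iio x) := by rw [hsing, add_zero]
  · exact measure_mono Iio_subset_Iic_self

lemma map_cdf (hm : m (Ico 0 1) = 1) (hac : m ≪ volume) :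
    m.map (cdf m) = volume.restrict (Ico 0 1) := by
  apply Measure.ext_of_Iic
  intro s
  rw [Measure.map_apply (cdf_measurable m) measurableSet_Iic,
      Measure.restrict_apply measurableSet_Iic]
  have hL : m (cdf m ⁻¹' Iic s) = m (cdf m ⁻¹' Iic s ∩ Ico 0 1) :=
    (measure_inter_conull (compl_null m hm)).symm
  rw [hL]
  rcases lt_or_ge s 0 with hs | hs
  · have h1 : cdf m ⁻¹' Iic s ∩ Ico 0 1 = ∅ := by
      ext x
      simp only [mem_inter_iff, mem_preimage, mem_Iic, mem_Ico, mem_empty_iff_false, iff_false]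
      rintro ⟨h1, h2a, h2b⟩
      have h3 := floor_le_cdf m x
      have hfl : ⌊x⌋ = 0 := Int.floor_eq_zero_iff.2 ⟨h2a, h2b⟩
      rw [hfl] at h3
      push_cast at h3
      linarith
    have h2 : Iic s ∩ Ico (0:ℝ) 1 = ∅ := by
      ext x
      simp only [mem_inter_iff, mem_Iic, mem_Ico, mem_empty_iff_false, iff_false]
      rintro ⟨h1, h2a, h2b⟩
      linarith
    rw [h1, h2]; simp
  rcases le_or_gt 1 s with hs1 | hs1
  · have h1 : cdf m ⁻¹' Iic s ∩ Ico 0 1 = Ico 0 1 := by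
      apply inter_eq_right.2
      intro x hx
      simp only [mem_preimage, mem_Iic]
      rw [cdf_eq_Iio m hm hx]
      exact le_trans (toReal_le_one m _) hs1
    have h2 : Iic s ∩ Ico (0:ℝ) 1 = Ico 0 1 := by
      apply inter_eq_right.2
      intro x hx
      exact le_trans hx.2.le hs1
    rw [h1, h2, hm, Real.volume_Ico]
    norm_num
  · -- main case : 0 ≤ s < 1
    set F : ℝ → ℝ := fun x => (m (Iio x)).toReal with hF
    have hFmono : Monotone F := fun a b hab =>
      ENNReal.toReal_mono (measure_ne_top m _) (measure_mono (Iio_subset_Iio hab))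
    set A : Set ℝ := {x ∈ Icc (0:ℝ) 1 | F x ≤ s} with hA
    have hA0 : (0:ℝ) ∈ A := by
      refine ⟨⟨le_rfl, zero_le_one⟩, ?_⟩
      show F 0 ≤ s
      simp only [hF, Iio_zero_null m hm, ENNReal.toReal_zero]
      exact hs
    have hAne : A.Nonempty := ⟨0, hA0⟩
    have hAbdd : BddAbove A := ⟨1, fun x hx => hx.1.2⟩
    set q := sSup A with hq
    have hq0 : 0 ≤ q := le_csSup hAbdd hA0
    have hq1 : q ≤ 1 := csSup_le hAne (fun x hx => hx.1.2)
    have hlt_mem : ∀ x, x < q → m (Iio x) ≤ ENNReal.ofReal s := by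
      intro x hx
      obtain ⟨a, ha, hxa⟩ := exists_lt_of_lt_csSup hAne hx
      have h2 : m (Iio a) ≤ ENNReal.ofReal s := by
        rw [← ENNReal.ofReal_toReal (measure_ne_top m (Iio a))]
        exact ENNReal.ofReal_le_ofReal ha.2
      exact le_trans (measure_mono (Iio_subset_Iio hxa.le)) h2
    have hIioq_le : m (Iio q) ≤ ENNReal.ofReal s := by
      refine le_of_tendsto (tendsto_Iio_left m q) ?_
      filter_upwards with n
      apply hlt_mem
      have : (0:ℝ) < 1/((n:ℝ)+1) := by positivity
      linarith
    have hIicq_ge : ENNReal.ofReal s ≤ m (Iic q) := by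
      rcases eq_or_lt_of_le hq1 with h1 | h1
      · rw [h1]
        calc ENNReal.ofReal s ≤ 1 := ENNReal.ofReal_le_one.2 hs1.le
          _ = m (Ico 0 1) := hm.symm
          _ ≤ m (Iic 1) := measure_mono (fun y hy => hy.2.le)
      · by_contra hcon
        push_neg at hcon
        have hev1 : ∀ᶠ n : ℕ in Filter.atTop, m (Iic (q + 1/(n+1))) < ENNReal.ofReal s :=
          (tendsto_Iic_right m q).eventually (eventually_lt_nhds hcon)
        obtain ⟨N0, hN0⟩ := Filter.eventually_atTop.1 hev1
        obtain ⟨N1, hN1⟩ := exists_nat_gt (1/(1-q))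
        set n := max N0 N1 with hn
        have ha := hN0 n (le_max_left _ _)
        have h1q : 0 < 1 - q := by linarith
        have hb : 1/((n:ℝ)+1) < 1 - q := by
          have hc : (N1:ℝ) ≤ n := Nat.cast_le.2 (le_max_right _ _)
          have hd : 1/(1-q) < (n:ℝ)+1 := by linarith
          rw [div_lt_iff₀ (by positivity)] at hd ⊢
          nlinarith
        set q' := q + 1/((n:ℝ)+1) with hq'
        have hpos : (0:ℝ) < 1/((n:ℝ)+1) := by positivity
        have hge : (0:ℝ) ≤ q' := by rw [hq']; positivity
        have hle1 : q' ≤ 1 := by rw [hq']; linarith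
        have hq'mem : q' ∈ A := by
          refine ⟨⟨hge, hle1⟩, ?_⟩
          show F q' ≤ s
          have h3 : m (Iio q') ≤ m (Iic q') := measure_mono Iio_subset_Iic_self
          have h4 : m (Iio q') < ENNReal.ofReal s := lt_of_le_of_lt h3 ha
          have h5 := ENNReal.toReal_mono ENNReal.ofReal_ne_top h4.le
          rw [ENNReal.toReal_ofReal hs] at h5
          exact h5
        have h7 : q' ≤ q := le_csSup hAbdd hq'mem
        rw [hq'] at h7
        linarith
    have hq_eq : m (Iio q) = ENNReal.ofReal s := by
      apply le_antisymm hIioq_le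
      rw [← measure_Iic_eq_Iio m hac]
      exact hIicq_ge
    have hsub1 : Ico 0 q ⊆ cdf m ⁻¹' Iic s ∩ Ico 0 1 := by
      intro x hx
      have hx1 : x < 1 := lt_of_lt_of_le hx.2 hq1
      refine ⟨?_, hx.1, hx1⟩
      obtain ⟨a, ha, hxa⟩ := exists_lt_of_lt_csSup hAne hx.2
      simp only [mem_preimage, mem_Iic]
      rw [cdf_eq_Iio m hm ⟨hx.1, hx1⟩]
      exact le_trans (hFmono hxa.le) ha.2
    have hsub2 : cdf m ⁻¹' Iic s ∩ Ico 0 1 ⊆ Iic q := by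
      intro x hx
      have hcx : cdf m x = F x := cdf_eq_Iio m hm hx.2
      have hxA : x ∈ A := ⟨⟨hx.2.1, hx.2.2.le⟩, by show F x ≤ s; rw [← hcx]; exact hx.1⟩
      exact le_csSup hAbdd hxA
    have hIics : Iic s ∩ Ico (0:ℝ) 1 = Icc 0 s := by
      ext x
      simp only [mem_inter_iff, mem_Iic, mem_Ico, mem_Icc]
      constructor
      · rintro ⟨h1, h2, h3⟩; exact ⟨h2, h1⟩
      · rintro ⟨h1, h2⟩; exact ⟨h2, h1, lt_of_le_of_lt h2 hs1⟩
    rw [hIics, Real.volume_Icc]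
    apply le_antisymm
    · refine le_trans (measure_mono hsub2) ?_
      rw [measure_Iic_eq_Iio m hac, hq_eq]
      exact ENNReal.ofReal_le_ofReal (by linarith)
    · refine le_trans ?_ (measure_mono hsub1)
      have h6 : m (Iio q) ≤ m (Ico 0 q) := by
        calc m (Iio q) ≤ m (Iio 0 ∪ Ico 0 q) := by
              apply measure_mono; intro y hy
              rcases lt_or_ge y 0 with hy0 | hy0
              · exact Or.inl hy0
              · exact Or.inr ⟨hy0, hy⟩
          _ ≤ m (Iio 0) + m (Ico 0 q) := measure_union_le _ _
          _ = m (Ico 0 q) := by rw [Iio_zero_null m hm, zero_add]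
      calc ENNReal.ofReal (s - 0) = m (Iio q) := by rw [hq_eq, sub_zero]
        _ ≤ m (Ico 0 q) := h6

omit [IsProbabilityMeasure m] in
lemma map_fract_sub (α : ℝ) :
    (volume.restrict (Ico 0 1)).map (fun u => Int.fract (u - α)) = volume.restrict (Ico 0 1) := by
  have hmeas : Measurable fun u : ℝ => Int.fract (u - α) :=
    Measurable.fract (measurable_id.sub_const α)
  apply Measure.ext_of_Iic
  intro s
  rw [Measure.map_apply hmeas measurableSet_Iic,
      Measure.restrict_apply (hmeas measurableSet_Iic),
      Measure.restrict_apply measurableSet_Iic]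
  set β := Int.fract α with hβ
  have hβ0 : 0 ≤ β := Int.fract_nonneg α
  have hβ1 : β < 1 := Int.fract_lt_one α
  have hfr : ∀ u : ℝ, Int.fract (u - α) = Int.fract (u - β) := by
    intro u
    have h : u - α = (u - β) - (⌊α⌋ : ℝ) := by
      rw [hβ]; unfold Int.fract; ring
    rw [h, Int.fract_sub_intCast]
  rcases lt_or_ge s 0 with hs | hs
  · have h1 : (fun u : ℝ => Int.fract (u - α)) ⁻¹' Iic s ∩ Ico 0 1 = ∅ := by
      ext u
      simp only [mem_inter_iff, mem_preimage, mem_Iic, mem_Ico, mem_empty_iff_false, iff_false]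
      rintro ⟨h1, _, _⟩
      linarith [Int.fract_nonneg (u - α)]
    have h2 : Iic s ∩ Ico (0:ℝ) 1 = ∅ := by
      ext u
      simp only [mem_inter_iff, mem_Iic, mem_Ico, mem_empty_iff_false, iff_false]
      rintro ⟨h1, h2, _⟩
      linarith
    rw [h1, h2]
  rcases le_or_gt 1 s with hs1 | hs1
  · have h1 : (fun u : ℝ => Int.fract (u - α)) ⁻¹' Iic s ∩ Ico 0 1 = Ico 0 1 := by
      apply inter_eq_right.2
      intro u _
      simp only [mem_preimage, mem_Iic]
      linarith [Int.fract_lt_one (u - α)]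
    have h2 : Iic s ∩ Ico (0:ℝ) 1 = Ico 0 1 := by
      apply inter_eq_right.2
      intro u hu
      exact le_trans hu.2.le hs1
    rw [h1, h2]
  · -- 0 ≤ s < 1
    have hset : (fun u : ℝ => Int.fract (u - α)) ⁻¹' Iic s ∩ Ico 0 1
        = (Ico β 1 ∩ Iic (β + s)) ∪ Icc 0 (β + s - 1) := by
      ext u
      simp only [mem_inter_iff, mem_preimage, mem_Iic, mem_Ico, mem_Icc, mem_union]
      constructor
      · rintro ⟨h1, h2, h3⟩
        rw [hfr] at h1
        rcases le_or_gt β u with hu | hu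
        · left
          have he : Int.fract (u - β) = u - β := Int.fract_eq_self.2 ⟨by linarith, by linarith⟩
          rw [he] at h1
          exact ⟨⟨hu, h3⟩, by linarith⟩
        · right
          have he : Int.fract (u - β) = u - β + 1 := by
            have h4 : u - β = (u - β + 1) - ((1:ℤ) : ℝ) := by push_cast; ring
            rw [h4, Int.fract_sub_intCast, Int.fract_eq_self.2 ⟨by linarith, by linarith⟩]
            push_cast; ring
          rw [he] at h1
          exact ⟨h2, by linarith⟩
      · rintro (⟨⟨h1, h2⟩, h3⟩ | ⟨h1, h2⟩)
        · refine ⟨?_, by linarith, h2⟩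
          rw [hfr, Int.fract_eq_self.2 ⟨by linarith, by linarith⟩]
          linarith
        · refine ⟨?_, h1, by linarith⟩
          have h4 : u - β = (u - β + 1) - ((1:ℤ) : ℝ) := by push_cast; ring
          rw [hfr, h4, Int.fract_sub_intCast, Int.fract_eq_self.2 ⟨by linarith, by linarith⟩]
          linarith
    have hdisj : Disjoint (Ico β 1 ∩ Iic (β + s)) (Icc 0 (β + s - 1)) := by
      apply Set.disjoint_left.2
      rintro u ⟨⟨h1, _⟩, _⟩ ⟨_, h4⟩
      linarith
    have hIics : Iic s ∩ Ico (0:ℝ) 1 = Icc 0 s := by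
      ext x
      simp only [mem_inter_iff, mem_Iic, mem_Ico, mem_Icc]
      constructor
      · rintro ⟨h1, h2, h3⟩; exact ⟨h2, h1⟩
      · rintro ⟨h1, h2⟩; exact ⟨h2, h1, lt_of_le_of_lt h2 hs1⟩
    rw [hset, hIics, measure_union hdisj measurableSet_Icc]
    rcases le_or_gt 1 (β + s) with hbs | hbs
    · have hA1 : Ico β 1 ∩ Iic (β + s) = Ico β 1 := by
        apply inter_eq_left.2
        intro u hu
        simp only [mem_Iic]
        linarith [hu.2]
      rw [hA1, Real.volume_Ico, Real.volume_Icc, Real.volume_Icc,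
          ← ENNReal.ofReal_add (by linarith) (by linarith)]
      congr 1
      ring
    · have hA1 : Ico β 1 ∩ Iic (β + s) = Icc β (β + s) := by
        ext u
        simp only [mem_inter_iff, mem_Ico, mem_Iic, mem_Icc]
        constructor
        · rintro ⟨⟨h1, _⟩, h3⟩; exact ⟨h1, h3⟩
        · rintro ⟨h1, h2⟩; exact ⟨⟨h1, by linarith⟩, h2⟩
      rw [hA1, Real.volume_Icc, Real.volume_Icc, Real.volume_Icc]
      have hz : ENNReal.ofReal (β + s - 1 - 0) = 0 := by
        apply ENNReal.ofReal_eq_zero.2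
        linarith
      rw [hz, add_zero]
      congr 1
      ring

lemma map_quantile (hm : m (Ico 0 1) = 1) :
    (volume.restrict (Ico 0 1)).map (fun u => Int.fract (quantile m u)) = m := by
  have hmeas : Measurable fun u : ℝ => Int.fract (quantile m u) :=
    Measurable.fract (quantile_measurable m)
  symm
  apply Measure.ext_of_Iic
  intro t
  rw [Measure.map_apply hmeas measurableSet_Iic,
      Measure.restrict_apply (hmeas measurableSet_Iic)]
  have hfq : ∀ u ∈ Ico (0:ℝ) 1, Int.fract (quantile m u) = quantile m u := fun u hu =>
    Int.fract_eq_self.2 ⟨(quantile_mem_Ico m hm hu).1, (quantile_mem_Ico m hm hu).2⟩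
  rcases lt_or_ge t 0 with ht | ht
  · have h1 : (fun u => Int.fract (quantile m u)) ⁻¹' Iic t ∩ Ico 0 1 = ∅ := by
      ext u
      simp only [mem_inter_iff, mem_preimage, mem_Iic, mem_Ico, mem_empty_iff_false, iff_false]
      rintro ⟨h1, h2a, h2b⟩
      rw [hfq u ⟨h2a, h2b⟩] at h1
      linarith [(quantile_mem_Ico m hm ⟨h2a, h2b⟩).1]
    rw [h1, measure_empty]
    have h2 : m (Iic t) ≤ m (Iio 0) := measure_mono (fun y hy => lt_of_le_of_lt hy ht)
    rw [Iio_zero_null m hm] at h2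
    exact le_antisymm h2 zero_le
  rcases le_or_gt 1 t with ht1 | ht1
  · have h1 : (fun u => Int.fract (quantile m u)) ⁻¹' Iic t ∩ Ico 0 1 = Ico 0 1 := by
      apply inter_eq_right.2
      intro u hu
      simp only [mem_preimage, mem_Iic]
      rw [hfq u hu]
      linarith [(quantile_mem_Ico m hm hu).2]
    rw [h1, Real.volume_Ico]
    have hge : (1:ENNReal) ≤ m (Iic t) := by
      rw [← hm]
      exact measure_mono (fun y hy => le_trans hy.2.le ht1)
    rw [le_antisymm prob_le_one hge]
    norm_num
  · -- 0 ≤ t < 1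
    set tf : ℕ → ℝ := fun n => t + (1 - t)/(n+1) with htf
    have htf_mem : ∀ n : ℕ, 0 < tf n ∧ tf n ≤ 1 ∧ t < tf n := by
      intro n
      have h1 : 0 < (1 - t)/((n:ℝ)+1) := div_pos (by linarith) (by positivity)
      have h2 : (1 - t)/((n:ℝ)+1) ≤ 1 - t := by
        apply div_le_self (by linarith)
        have : (0:ℝ) ≤ (n:ℝ) := Nat.cast_nonneg n
        linarith
      refine ⟨by simp only [htf]; linarith, by simp only [htf]; linarith,
        by simp only [htf]; linarith⟩
    have hset : (fun u => Int.fract (quantile m u)) ⁻¹' Iic t ∩ Ico 0 1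
        = ⋂ n : ℕ, Ico 0 ((m (Iio (tf n))).toReal) := by
      ext u
      simp only [mem_inter_iff, mem_preimage, mem_Iic, mem_iInter, mem_Ico]
      constructor
      · rintro ⟨h1, h2a, h2b⟩
        rw [hfq u ⟨h2a, h2b⟩] at h1
        intro n
        refine ⟨h2a, ?_⟩
        exact (quantile_lt_iff m hm h2a (htf_mem n).1 (htf_mem n).2.1).1
          (lt_of_le_of_lt h1 (htf_mem n).2.2)
      · intro hall
        have hu0 : 0 ≤ u := (hall 0).1
        have hu1 : u < 1 := lt_of_lt_of_le (hall 0).2 (toReal_le_one m _)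
        refine ⟨?_, hu0, hu1⟩
        rw [hfq u ⟨hu0, hu1⟩]
        by_contra hc
        push_neg at hc
        obtain ⟨n, hn⟩ := exists_nat_gt ((1 - t)/(quantile m u - t))
        have hqt : 0 < quantile m u - t := by linarith
        have hlt : (1-t)/((n:ℝ)+1) < quantile m u - t := by
          have hd : (1-t)/(quantile m u - t) < (n:ℝ)+1 := by linarith
          rw [div_lt_iff₀ hqt] at hd
          rw [div_lt_iff₀ (by positivity)]
          nlinarith
        have htfn : tf n < quantile m u := by
          simp only [htf]; linarith
        have := (quantile_lt_iff m hm hu0 (htf_mem n).1 (htf_mem n).2.1).2 (hall n).2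
        linarith
    rw [hset]
    have htf_anti : Antitone tf := by
      intro a b hab
      have hc : (a:ℝ) ≤ b := Nat.cast_le.2 hab
      have : (1-t)/((b:ℝ)+1) ≤ (1-t)/((a:ℝ)+1) :=
        div_le_div_of_nonneg_left (by linarith) (by positivity) (by linarith)
      simp only [htf]
      linarith
    have h_inter_m : (⋂ n, Iio (tf n)) = Iic t := by
      apply Subset.antisymm
      · intro y hy
        simp only [mem_iInter, mem_Iio] at hy
        simp only [mem_Iic]
        by_contra hc
        push_neg at hc
        obtain ⟨n, hn⟩ := exists_nat_gt ((1 - t)/(y - t))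
        have hyt : 0 < y - t := by linarith
        have hlt : (1-t)/((n:ℝ)+1) < y - t := by
          have hd : (1-t)/(y - t) < (n:ℝ)+1 := by linarith
          rw [div_lt_iff₀ hyt] at hd
          rw [div_lt_iff₀ (by positivity)]
          nlinarith
        have := hy n
        simp only [htf] at this
        linarith
      · intro y hy
        simp only [mem_Iic] at hy
        simp only [mem_iInter, mem_Iio]
        intro n
        exact lt_of_le_of_lt hy (htf_mem n).2.2
    have htend1 : Filter.Tendsto (fun n => m (Iio (tf n))) Filter.atTop (nhds (m (Iic t))) := by
      have := tendsto_measure_iInter_atTop (μ := m)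
        (fun n => measurableSet_Iio.nullMeasurableSet)
        (fun a b hab => Iio_subset_Iio (htf_anti hab)) ⟨0, measure_ne_top m _⟩
      rwa [h_inter_m] at this
    have hterm : ∀ n : ℕ, volume (Ico (0:ℝ) ((m (Iio (tf n))).toReal)) = m (Iio (tf n)) := by
      intro n
      rw [Real.volume_Ico, sub_zero, ENNReal.ofReal_toReal (measure_ne_top m _)]
    have htend2 : Filter.Tendsto (fun n => volume (Ico (0:ℝ) ((m (Iio (tf n))).toReal)))
        Filter.atTop (nhds (volume (⋂ n, Ico (0:ℝ) ((m (Iio (tf n))).toReal)))) := by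
      apply tendsto_measure_iInter_atTop
        (fun n => measurableSet_Ico.nullMeasurableSet)
        (fun a b hab => Ico_subset_Ico le_rfl
          (ENNReal.toReal_mono (measure_ne_top m _)
            (measure_mono (Iio_subset_Iio (htf_anti hab)))))
        ⟨0, by rw [Real.volume_Ico]; exact ENNReal.ofReal_ne_top⟩
    have htend2' : Filter.Tendsto (fun n => m (Iio (tf n)))
        Filter.atTop (nhds (volume (⋂ n, Ico (0:ℝ) ((m (Iio (tf n))).toReal)))) := by
      simpa only [hterm] using htend2
    exact tendsto_nhds_unique htend1 htend2'

end LCOTAux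

/-- Invertibility of the LCOT embedding: `ν = (ν̂^{μ,h} + id)_# μ`
(the sum being taken modulo ℤ, i.e. on the circle). -/
theorem lcotEmbed_invertible
    (h : ℝ → ℝ) (hconv : ConvexOn ℝ univ h)
    (hmono : MonotoneOn h (Ici 0)) (hnonneg : ∀ x, 0 ≤ h x)
    (μ ν : Measure ℝ) [IsProbabilityMeasure μ] [IsProbabilityMeasure ν]
    (hμ : μ (Ico 0 1) = 1) (hν : ν (Ico 0 1) = 1)
    (hac : μ ≪ volume)
    (α : ℝ) (hα : ∀ β : ℝ, shiftCost h μ ν α ≤ shiftCost h μ ν β) :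
    ν = μ.map (fun x => Int.fract (lcotEmbed μ ν α x + x)) := by
  have hfun : (fun x => Int.fract (lcotEmbed μ ν α x + x))
      = (fun u => Int.fract (quantile ν u)) ∘ (fun u => Int.fract (u - α)) ∘ (cdf μ) := by
    funext x
    simp only [lcotEmbed, Function.comp_apply, sub_add_cancel]
    rw [LCOTAux.fract_quantile ν hν (cdf μ x - α),
        LCOTAux.fract_quantile ν hν (Int.fract (cdf μ x - α)), Int.fract_fract]
  have h1 : Measurable (cdf μ) := LCOTAux.cdf_measurable μ
  have h2 : Measurable fun u : ℝ => Int.fract (u - α) :=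
    Measurable.fract (measurable_id.sub_const α)
  have h3 : Measurable fun u : ℝ => Int.fract (quantile ν u) :=
    Measurable.fract (LCOTAux.quantile_measurable ν)
  rw [hfun, ← Measure.map_map h3 (h2.comp h1), ← Measure.map_map h2 h1,
      LCOTAux.map_cdf μ hμ hac, LCOTAux.map_fract_sub α, LCOTAux.map_quantile ν hν]
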